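/- Let q, k be real with 0 < q < 1 and 0 < k < 1, set t := q^k, and let λ_1, λ_2 ∈ ℂ satisfy q^{λ_1−λ_2+1+m} ≠ 1 for all m ∈ ℕ. Define f(z_1, z_2) := z_1^{λ_1+k/2} · z_2^{λ_2−k/2} · F_q(k, λ_1−λ_2+k, λ_1−λ_2+1, q^{1−k} z_1/z_2) for real z_1, z_2 > 0, where z^c := exp(c · log z). Then for all real z_1, z_2 with 0 < z_1 < t z_2, f satisfies the rank-one Macdonald difference equation: t·[ ((t z_1 − z_2)/(z_1 − z_2))·f(q z_1, z_2) + ((t z_2 − z_1)/(z_2 − z_1))·f(z_1, q z_2) ] = q^{3k/2}·(q^{λ_1} + q^{λ_2})·f(z_1, z_2). -/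

import Mathlib

/-- `q^x := exp(x·log q)` for real `q > 0` and complex `x`. -/
noncomputable def qpow (q : ℝ) (x : ℂ) : ℂ := Complex.exp (x * Real.log q)

/-- The basic hypergeometric series
`F_q(a,b,c,z) = Σ_m [∏_{l<m} (1-q^{a+l})(1-q^{b+l})/((1-q^{1+l})(1-q^{c+l}))] z^m`. -/
noncomputable def qF (q : ℝ) (a b c z : ℂ) : ℂ :=
  ∑' m : ℕ, (∏ l ∈ Finset.range m,
    ((1 - qpow q (a + l)) * (1 - qpow q (b + l)) /
      ((1 - qpow q (1 + l)) * (1 - qpow q (c + l))))) * z ^ m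


open Filter

lemma qpow_add (q : ℝ) (x y : ℂ) : qpow q (x + y) = qpow q x * qpow q y := by
  simp [qpow, add_mul, Complex.exp_add]

lemma qpow_ne_zero (q : ℝ) (x : ℂ) : qpow q x ≠ 0 := Complex.exp_ne_zero _

lemma qpow_real (q : ℝ) (hq : 0 < q) (r : ℝ) : qpow q (r : ℂ) = ((q ^ r : ℝ) : ℂ) := by
  rw [Real.rpow_def_of_pos hq, qpow, ← Complex.ofReal_mul, ← Complex.ofReal_exp, mul_comm]

lemma qpow_nat (q : ℝ) (hq : 0 < q) (m : ℕ) : qpow q (m : ℂ) = (q : ℂ) ^ m := by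
  rw [qpow, Complex.exp_nat_mul]
  congr 1
  rw [← Complex.ofReal_exp, Real.exp_log hq]

lemma qpow_one (q : ℝ) (hq : 0 < q) : qpow q 1 = (q : ℂ) := by
  simpa using qpow_nat q hq 1

/-- the coefficient of the basic hypergeometric series -/
noncomputable def qcoef (q : ℝ) (a b c : ℂ) (m : ℕ) : ℂ :=
  ∏ l ∈ Finset.range m,
    ((1 - qpow q (a + l)) * (1 - qpow q (b + l)) /
      ((1 - qpow q (1 + l)) * (1 - qpow q (c + l))))

lemma qF_eq (q : ℝ) (a b c z : ℂ) : qF q a b c z = ∑' m : ℕ, qcoef q a b c m * z ^ m := rfl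

lemma qcoef_succ (q : ℝ) (hq : 0 < q) (a b c : ℂ) (m : ℕ) :
    qcoef q a b c (m + 1) = qcoef q a b c m *
      ((1 - qpow q a * (q:ℂ)^m) * (1 - qpow q b * (q:ℂ)^m) /
        ((1 - (q:ℂ) * (q:ℂ)^m) * (1 - qpow q c * (q:ℂ)^m))) := by
  rw [qcoef, Finset.prod_range_succ, ← qcoef]
  rw [qpow_add, qpow_add, qpow_add, qpow_add, qpow_nat q hq, qpow_one q hq]

lemma qcoef_summable (q : ℝ) (hq0 : 0 < q) (hq1 : q < 1) (a b c : ℂ) (z : ℂ) (hz : ‖z‖ < 1) :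
    Summable (fun m : ℕ => qcoef q a b c m * z ^ m) := by
  apply summable_of_ratio_norm_eventually_le (r := (1 + ‖z‖) / 2)
  · linarith
  · have hQ : ‖(q:ℂ)‖ < 1 := by rw [Complex.norm_real, Real.norm_eq_abs, abs_of_pos hq0]; exact hq1
    have h0 : Filter.Tendsto (fun m : ℕ => (q:ℂ) ^ m) Filter.atTop (nhds 0) :=
      tendsto_pow_atTop_nhds_zero_of_norm_lt_one hQ
    have lim1 : ∀ w : ℂ, Filter.Tendsto (fun m : ℕ => 1 - w * (q:ℂ)^m) Filter.atTop (nhds 1) := by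
      intro w
      have h1 := (h0.const_mul w).const_sub (1:ℂ)
      simpa using h1
    have limd : Filter.Tendsto (fun m : ℕ =>
        ‖(1 - qpow q a * (q:ℂ)^m) * (1 - qpow q b * (q:ℂ)^m) /
          ((1 - (q:ℂ) * (q:ℂ)^m) * (1 - qpow q c * (q:ℂ)^m))‖ * ‖z‖) Filter.atTop
        (nhds ‖z‖) := by
      have hd : Filter.Tendsto (fun m : ℕ =>
          (1 - qpow q a * (q:ℂ)^m) * (1 - qpow q b * (q:ℂ)^m) /
            ((1 - (q:ℂ) * (q:ℂ)^m) * (1 - qpow q c * (q:ℂ)^m))) Filter.atTop (nhds 1) := by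
        have hnum := (lim1 (qpow q a)).mul (lim1 (qpow q b))
        have hden := (lim1 (q:ℂ)).mul (lim1 (qpow q c))
        convert hnum.div hden (by norm_num) using 2 <;> norm_num
      have := (hd.norm).mul_const ‖z‖
      simpa using this
    have hlt : ‖z‖ < (1 + ‖z‖) / 2 := by linarith
    filter_upwards [limd.eventually_lt_const hlt] with m hm
    have e : qcoef q a b c (m+1) * z ^ (m+1) = (qcoef q a b c m * z ^ m) *
        ((1 - qpow q a * (q:ℂ)^m) * (1 - qpow q b * (q:ℂ)^m) /
          ((1 - (q:ℂ) * (q:ℂ)^m) * (1 - qpow q c * (q:ℂ)^m)) * z) := by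
      rw [qcoef_succ q hq0, pow_succ]; ring
    rw [e, norm_mul, mul_comm ((1 + ‖z‖) / 2) _]
    refine mul_le_mul_of_nonneg_left ?_ (norm_nonneg _)
    rw [norm_mul]; exact le_of_lt hm

lemma core_lemma (q k : ℝ) (hq0 : 0 < q) (hq1 : q < 1) (lam1 lam2 : ℂ)
    (hnd : ∀ m : ℕ, qpow q (lam1 - lam2 + 1 + m) ≠ 1)
    (x : ℂ) (hx : ‖x‖ < q) :
    qpow q lam1 * ((q:ℂ) - qpow q k * qpow q k * x) *
        qF q k (lam1 - lam2 + k) (lam1 - lam2 + 1) ((q:ℂ) * x) +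
      qpow q lam2 * ((q:ℂ) - x) *
        qF q k (lam1 - lam2 + k) (lam1 - lam2 + 1) (x / (q:ℂ)) =
    (qpow q lam1 + qpow q lam2) * ((q:ℂ) - qpow q k * x) *
        qF q k (lam1 - lam2 + k) (lam1 - lam2 + 1) x := by
  set A := qpow q lam1 with hA
  set B := qpow q lam2 with hB
  set S := qpow q (k:ℂ) with hS
  set β := qpow q (lam1 - lam2 + k) with hβ
  set γ := qpow q (lam1 - lam2 + 1) with hγ
  set Q : ℂ := (q:ℂ) with hQ
  set c : ℕ → ℂ := qcoef q k (lam1 - lam2 + k) (lam1 - lam2 + 1) with hc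
  have hQ0 : Q ≠ 0 := by rw [hQ]; exact_mod_cast ne_of_gt hq0
  have hB0 : B ≠ 0 := qpow_ne_zero q lam2
  have hγval : γ = A * Q / B := by
    rw [eq_div_iff hB0, hγ, hB, ← qpow_add, hA, hQ, ← qpow_one q hq0, ← qpow_add]
    congr 1; ring
  have hβval : β = A * S / B := by
    rw [eq_div_iff hB0, hβ, hB, ← qpow_add, hA, hS, ← qpow_add]
    congr 1; ring
  have hnz1 : ∀ m : ℕ, (1:ℂ) - Q * Q^m ≠ 0 := by
    intro m h
    have h2 : Q^(m+1) = 1 := by rw [pow_succ']; linear_combination -h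
    have h4 : q^(m+1) = 1 := by rw [hQ] at h2; exact_mod_cast h2
    have h5 : q^(m+1) < 1 := pow_lt_one₀ (le_of_lt hq0) hq1 (Nat.succ_ne_zero m)
    linarith
  have hnz2 : ∀ m : ℕ, (1:ℂ) - γ * Q^m ≠ 0 := by
    intro m h
    apply hnd m
    rw [qpow_add, qpow_nat q hq0, ← hγ, ← hQ]
    linear_combination -h
  have crec : ∀ m : ℕ, c (m+1) = c m *
      ((1 - S * Q^m) * (1 - β * Q^m) / ((1 - Q * Q^m) * (1 - γ * Q^m))) :=
    fun m => qcoef_succ q hq0 _ _ _ m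
  -- summability
  have hx1 : ‖x‖ < 1 := lt_trans hx hq1
  have hQx : ‖Q * x‖ < 1 := by
    rw [norm_mul, hQ, Complex.norm_real, Real.norm_eq_abs, abs_of_pos hq0]
    nlinarith [norm_nonneg x]
  have hxQ : ‖x / Q‖ < 1 := by
    rw [norm_div, hQ, Complex.norm_real, Real.norm_eq_abs, abs_of_pos hq0]
    rw [div_lt_one hq0]; exact hx
  have S1 : Summable (fun m => c m * (Q*x)^m) := qcoef_summable q hq0 hq1 _ _ _ _ hQx
  have S2 : Summable (fun m => c m * (x/Q)^m) := qcoef_summable q hq0 hq1 _ _ _ _ hxQ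
  have S3 : Summable (fun m => c m * x^m) := qcoef_summable q hq0 hq1 _ _ _ _ hx1
  -- the two sides as single sums
  have SP : Summable (fun m => A*Q*(c m*(Q*x)^m) + B*Q*(c m*(x/Q)^m) - (A+B)*Q*(c m*x^m)) :=
    ((S1.mul_left (A*Q)).add (S2.mul_left (B*Q))).sub (S3.mul_left ((A+B)*Q))
  have e1 : (∑' m : ℕ, (A*Q*(c m*(Q*x)^m) + B*Q*(c m*(x/Q)^m) - (A+B)*Q*(c m*x^m)))
      = A*Q*(∑' m : ℕ, c m*(Q*x)^m) + B*Q*(∑' m : ℕ, c m*(x/Q)^m)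
        - (A+B)*Q*(∑' m : ℕ, c m*x^m) := by
    rw [Summable.tsum_sub ((S1.mul_left (A*Q)).add (S2.mul_left (B*Q))) (S3.mul_left ((A+B)*Q)),
      Summable.tsum_add (S1.mul_left (A*Q)) (S2.mul_left (B*Q)), tsum_mul_left, tsum_mul_left,
      tsum_mul_left]
  have e2 : (∑' m : ℕ, (A*(S*S)*x*(c m*(Q*x)^m) + B*x*(c m*(x/Q)^m) - (A+B)*S*x*(c m*x^m)))
      = A*(S*S)*x*(∑' m : ℕ, c m*(Q*x)^m) + B*x*(∑' m : ℕ, c m*(x/Q)^m)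
        - (A+B)*S*x*(∑' m : ℕ, c m*x^m) := by
    rw [Summable.tsum_sub ((S1.mul_left (A*(S*S)*x)).add (S2.mul_left (B*x))) (S3.mul_left ((A+B)*S*x)),
      Summable.tsum_add (S1.mul_left (A*(S*S)*x)) (S2.mul_left (B*x)), tsum_mul_left, tsum_mul_left,
      tsum_mul_left]
  -- termwise shift identity
  have hAB1 : B * γ = A * Q := by
    rw [hB, hγ, hA, hQ, ← qpow_add, ← qpow_one q hq0, ← qpow_add]
    congr 1; ring
  have hAB2 : B * β = A * S := by
    rw [hB, hβ, hA, hS, ← qpow_add, ← qpow_add]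
    congr 1; ring
  have hPR : ∀ m : ℕ,
      A*Q*(c (m+1)*(Q*x)^(m+1)) + B*Q*(c (m+1)*(x/Q)^(m+1)) - (A+B)*Q*(c (m+1)*x^(m+1))
      = A*(S*S)*x*(c m*(Q*x)^m) + B*x*(c m*(x/Q)^m) - (A+B)*S*x*(c m*x^m) := by
    intro m
    have hcm : c (m+1) * ((1 - Q*Q^m) * (1 - γ*Q^m)) = c m * ((1 - S*Q^m) * (1 - β*Q^m)) := by
      rw [crec m, mul_assoc, div_mul_cancel₀ _ (mul_ne_zero (hnz1 m) (hnz2 m))]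
    have hdiv1 : x^(m+1)/Q^(m+1) * Q^(m+1) = x^(m+1) :=
      div_mul_cancel₀ _ (pow_ne_zero (m+1) hQ0)
    have hdiv2 : x^m/Q^m * Q^m = x^m := div_mul_cancel₀ _ (pow_ne_zero m hQ0)
    rw [div_pow, div_pow, mul_pow, mul_pow]
    apply mul_right_cancel₀ (pow_ne_zero (m+1) hQ0)
    linear_combination (B*Q*(c (m+1)))*hdiv1 - (B*x*(c m)*Q)*hdiv2 + (Q*x^(m+1)*B)*hcm +
      (Q*x^(m+1)*(c (m+1))*(Q^m - Q*(Q^m)^2))*hAB1 -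
      (Q*x^(m+1)*(c m)*(Q^m - S*(Q^m)^2))*hAB2
  -- shift the sum
  have e0 : (∑' m : ℕ, (A*Q*(c m*(Q*x)^m) + B*Q*(c m*(x/Q)^m) - (A+B)*Q*(c m*x^m)))
      = (∑' m : ℕ, (A*(S*S)*x*(c m*(Q*x)^m) + B*x*(c m*(x/Q)^m) - (A+B)*S*x*(c m*x^m))) := by
    rw [Summable.tsum_eq_zero_add SP]
    have h00 : A*Q*(c 0*(Q*x)^0) + B*Q*(c 0*(x/Q)^0) - (A+B)*Q*(c 0*x^0) = 0 := by ring
    rw [h00, zero_add]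
    exact tsum_congr hPR
  have H := (e1.symm.trans e0).trans e2
  rw [qF_eq, qF_eq, qF_eq]
  linear_combination H


/-- The rank-one Macdonald difference equation for the q-hypergeometric solution
`f(z₁,z₂) = z₁^{λ₁+k/2} z₂^{λ₂-k/2} F_q(k, λ₁-λ₂+k, λ₁-λ₂+1, q^{1-k} z₁/z₂)`. -/
theorem stmt3 (q k t : ℝ) (hq0 : 0 < q) (hq1 : q < 1) (hk0 : 0 < k) (hk1 : k < 1)
    (ht : t = q ^ k) (lam1 lam2 : ℂ)
    (hnd : ∀ m : ℕ, qpow q (lam1 - lam2 + 1 + m) ≠ 1)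
    (f : ℝ → ℝ → ℂ)
    (hf : ∀ w1 w2 : ℝ, 0 < w1 → 0 < w2 →
      f w1 w2 = Complex.exp ((lam1 + (k : ℂ) / 2) * Real.log w1) *
        Complex.exp ((lam2 - (k : ℂ) / 2) * Real.log w2) *
        qF q k (lam1 - lam2 + (k : ℂ)) (lam1 - lam2 + 1) (qpow q (1 - k) * w1 / w2))
    (z1 z2 : ℝ) (hz1 : 0 < z1) (hz12 : z1 < t * z2) :
    (t : ℂ) * (((t : ℂ) * (z1 : ℂ) - (z2 : ℂ)) / ((z1 : ℂ) - (z2 : ℂ)) * f (q * z1) z2 +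
        ((t : ℂ) * (z2 : ℂ) - (z1 : ℂ)) / ((z2 : ℂ) - (z1 : ℂ)) * f z1 (q * z2)) =
      qpow q (3 * k / 2) * (qpow q lam1 + qpow q lam2) * f z1 z2 := by
  have ht0 : 0 < t := ht ▸ Real.rpow_pos_of_pos hq0 k
  have ht1 : t < 1 := by
    rw [ht]; exact Real.rpow_lt_one (le_of_lt hq0) hq1 hk0
  have hz2 : 0 < z2 := by nlinarith
  have hz1z2 : z1 < z2 := by nlinarith
  -- the argument x
  set ξ : ℝ := q ^ (1 - k : ℝ) * z1 / z2 with hξ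
  have hξ0 : 0 < ξ := by
    apply div_pos (mul_pos (Real.rpow_pos_of_pos hq0 _) hz1) hz2
  have hξq : ξ < q := by
    rw [hξ, div_lt_iff₀ hz2]
    calc q ^ (1 - k : ℝ) * z1 < q ^ (1 - k : ℝ) * (t * z2) := by
          exact mul_lt_mul_of_pos_left hz12 (Real.rpow_pos_of_pos hq0 _)
      _ = q * z2 := by
          rw [ht, ← mul_assoc, ← Real.rpow_add hq0]
          norm_num
  set x : ℂ := (ξ : ℂ) with hxdef
  have hxnorm : ‖x‖ < q := by
    rw [hxdef, Complex.norm_real, Real.norm_eq_abs, abs_of_pos hξ0]; exact hξq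
  have CORE := core_lemma q k hq0 hq1 lam1 lam2 hnd x hxnorm
  -- notation
  set A := qpow q lam1 with hA
  set B := qpow q lam2 with hB
  set s : ℂ := qpow q ((k:ℂ)/2) with hs
  have hs0 : s ≠ 0 := qpow_ne_zero _ _
  have hSs : qpow q (k:ℂ) = s * s := by
    rw [hs, ← qpow_add]; congr 1; ring
  have hts : (t:ℂ) = s * s := by
    rw [← hSs, ht, ← qpow_real q hq0]
  have h32 : qpow q (3 * (k:ℂ) / 2) = s * s * s := by
    rw [hs, ← qpow_add, ← qpow_add]; congr 1; ring
  have hAs : qpow q (lam1 + (k:ℂ)/2) = A * s := by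
    rw [hA, hs, ← qpow_add]
  have hDs : qpow q (lam2 - (k:ℂ)/2) * s = B := by
    rw [hB, hs, ← qpow_add]; congr 1; ring
  -- rewrite f values
  rw [hf (q*z1) z2 (mul_pos hq0 hz1) hz2, hf z1 (q*z2) hz1 (mul_pos hq0 hz2),
    hf z1 z2 hz1 hz2]
  -- the qF arguments
  have hq1k : qpow q (1 - (k:ℂ)) = ((q ^ (1-k : ℝ) : ℝ) : ℂ) := by
    rw [← qpow_real q hq0]; push_cast; ring_nf
  have harg0 : qpow q (1 - (k:ℂ)) * (z1:ℂ) / (z2:ℂ) = x := by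
    rw [hq1k, hxdef, hξ]; push_cast [ne_of_gt hz2]; ring
  have harg1 : qpow q (1 - (k:ℂ)) * ((q*z1 : ℝ):ℂ) / (z2:ℂ) = (q:ℂ) * x := by
    rw [← harg0]; push_cast; ring
  have harg2 : qpow q (1 - (k:ℂ)) * (z1:ℂ) / ((q*z2 : ℝ):ℂ) = x / (q:ℂ) := by
    rw [← harg0]; push_cast
    rw [div_div]
    rw [mul_comm ((z2:ℂ)) ((q:ℂ)), ← div_div]
  rw [harg1, harg2, harg0]
  -- split the logs
  have hlog1 : Real.log (q * z1) = Real.log q + Real.log z1 :=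
    Real.log_mul (ne_of_gt hq0) (ne_of_gt hz1)
  have hlog2 : Real.log (q * z2) = Real.log q + Real.log z2 :=
    Real.log_mul (ne_of_gt hq0) (ne_of_gt hz2)
  rw [hlog1, hlog2]
  have hexp1 : Complex.exp ((lam1 + (k:ℂ)/2) * ((Real.log q + Real.log z1 : ℝ):ℂ))
      = qpow q (lam1 + (k:ℂ)/2) * Complex.exp ((lam1 + (k:ℂ)/2) * (Real.log z1 : ℝ)) := by
    rw [qpow, ← Complex.exp_add]; congr 1; push_cast; ring
  have hexp2 : Complex.exp ((lam2 - (k:ℂ)/2) * ((Real.log q + Real.log z2 : ℝ):ℂ))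
      = qpow q (lam2 - (k:ℂ)/2) * Complex.exp ((lam2 - (k:ℂ)/2) * (Real.log z2 : ℝ)) := by
    rw [qpow, ← Complex.exp_add]; congr 1; push_cast; ring
  rw [hexp1, hexp2, hAs]
  -- derive the z-form of the core identity
  set F1 := qF q k (lam1 - lam2 + (k:ℂ)) (lam1 - lam2 + 1) ((q:ℂ) * x) with hF1
  set F2 := qF q k (lam1 - lam2 + (k:ℂ)) (lam1 - lam2 + 1) (x / (q:ℂ)) with hF2
  set F3 := qF q k (lam1 - lam2 + (k:ℂ)) (lam1 - lam2 + 1) x with hF3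
  have hxz : x * (z2:ℂ) * (s*s) = (q:ℂ) * (z1:ℂ) := by
    have hr : q ^ (1 - k : ℝ) * z1 / z2 * z2 * q ^ (k:ℝ) = q * z1 := by
      rw [div_mul_cancel₀ _ (ne_of_gt hz2), mul_right_comm, ← Real.rpow_add hq0]
      norm_num
    calc x * (z2:ℂ) * (s*s) = ((q ^ (1-k:ℝ) * z1 / z2 * z2 * q ^ (k:ℝ) : ℝ) : ℂ) := by
          rw [hxdef, hξ, ← hts, ht]; push_cast; ring
      _ = (q:ℂ) * (z1:ℂ) := by rw [hr]; push_cast; ring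
  have hQne : (q:ℂ) ≠ 0 := by exact_mod_cast ne_of_gt hq0
  rw [hSs] at CORE
  have CORE3 : A*(s*s)*((z2:ℂ) - (s*s)*(z1:ℂ))*F1 + B*((s*s)*(z2:ℂ) - (z1:ℂ))*F2
      = (A+B)*(s*s)*((z2:ℂ) - (z1:ℂ))*F3 := by
    apply mul_left_cancel₀ hQne
    linear_combination ((z2:ℂ)*(s*s))*CORE + (A*(s*s)*(s*s)*F1 + B*F2 - (A+B)*(s*s)*F3)*hxz
  -- final assembly
  have h12 : (z1:ℂ) - (z2:ℂ) ≠ 0 := by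
    rw [sub_ne_zero]; exact_mod_cast ne_of_lt hz1z2
  have h21 : (z2:ℂ) - (z1:ℂ) ≠ 0 := by
    rw [sub_ne_zero]; exact_mod_cast ne_of_gt hz1z2
  rw [hts, h32]
  have hDs' : qpow q (lam2 - (k:ℂ)/2) = B / s := by
    rw [eq_div_iff hs0]; exact hDs
  rw [hDs']
  set P1 := Complex.exp ((lam1 + (k:ℂ)/2) * ((Real.log z1 : ℝ):ℂ)) with hP1
  set P2 := Complex.exp ((lam2 - (k:ℂ)/2) * ((Real.log z2 : ℝ):ℂ)) with hP2
  field_simp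
  linear_combination (P1*P2*((z1:ℂ)-(z2:ℂ)))*CORE3
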